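/- arXiv:1511.04036 — 4 statements merged into one kernel-verified Lean document; each statement's English description precedes it below -/
import Mathlib

section
/- Let S₀ and S₁ be finite nonempty point sets whose convex hulls are disjoint. Then there exist p ∈ S₀ and q ∈ S₁ such that S₀ ⊆ LHP(p,q) and S₁ ⊆ RHP(p,q), i.e., a separating common tangent through a point of each set exists. -/
noncomputable def perp (x : ℝ × ℝ) : ℝ × ℝ := (-x.2, x.1)

noncomputable def dotp (x y : ℝ × ℝ) : ℝ := x.1 * y.1 + x.2 * y.2

noncomputable def Tor (a b c : ℝ × ℝ) : ℝ := Real.sign (dotp (perp (b - a)) (c - b))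

lemma key_id (U d e : ℝ × ℝ) :
    dotp U d * dotp (perp U) e - dotp (perp U) d * dotp U e
      = (U.1 ^ 2 + U.2 ^ 2) * dotp (perp d) e := by
  simp only [dotp, perp]
  ring

lemma sign_nonneg' {x : ℝ} (h : 0 ≤ x) : 0 ≤ Real.sign x := by
  rcases eq_or_lt_of_le h with h' | h'
  · simp [← h']
  · simp [Real.sign_of_pos h']

lemma sign_nonpos' {x : ℝ} (h : x ≤ 0) : Real.sign x ≤ 0 := by
  rcases eq_or_lt_of_le h with h' | h'
  · simp [h']
  · simp [Real.sign_of_neg h']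

theorem stmt13 (S₀ S₁ : Set (ℝ × ℝ)) (h₀fin : S₀.Finite) (h₁fin : S₁.Finite)
    (h₀ne : S₀.Nonempty) (h₁ne : S₁.Nonempty)
    (hdisj : convexHull ℝ S₀ ∩ convexHull ℝ S₁ = ∅)
    (hSdisj : S₀ ∩ S₁ = ∅)
    (hgp : ∀ x ∈ S₀ ∪ S₁, ∀ y ∈ S₀ ∪ S₁, ∀ z ∈ S₀ ∪ S₁,
      x ≠ y → y ≠ z → x ≠ z → ¬ Collinear ℝ ({x, y, z} : Set (ℝ × ℝ))) :
    ∃ p ∈ S₀, ∃ q ∈ S₁,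
      S₀ ⊆ {c | 0 ≤ Tor p q c} ∧ S₁ ⊆ {c | Tor p q c ≤ 0} := by
  have hdisj' : Disjoint (convexHull ℝ S₀) (convexHull ℝ S₁) :=
    Set.disjoint_iff_inter_eq_empty.mpr hdisj
  obtain ⟨f, a, b, hfa, hab, hfb⟩ :=
    geometric_hahn_banach_compact_closed (convex_convexHull ℝ S₀)
      (h₀fin.isCompact_convexHull ℝ) (convex_convexHull ℝ S₁)
      (h₁fin.isCompact_convexHull ℝ).isClosed hdisj'
  set U : ℝ × ℝ := (f (1, 0), f (0, 1)) with hUdef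
  have hfU : ∀ x : ℝ × ℝ, f x = dotp U x := by
    intro x
    have hx : x = x.1 • ((1:ℝ), (0:ℝ)) + x.2 • ((0:ℝ), (1:ℝ)) := by
      ext <;> simp
    rw [hx, map_add, map_smul, map_smul]
    simp [dotp, hUdef]
    ring
  have hsep : ∀ p ∈ S₀, ∀ q ∈ S₁, dotp U p < dotp U q := by
    intro p hp q hq
    rw [← hfU, ← hfU]
    exact ((hfa p (subset_convexHull ℝ S₀ hp)).trans hab).trans
      (hfb q (subset_convexHull ℝ S₁ hq))
  have hApos : ∀ p ∈ S₀, ∀ q ∈ S₁, 0 < dotp U (q - p) := by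
    intro p hp q hq
    have h := hsep p hp q hq
    simp only [dotp, Prod.fst_sub, Prod.snd_sub] at *
    nlinarith
  obtain ⟨⟨p, q⟩, hpqF, hmax⟩ :=
    Finset.exists_max_image (h₀fin.toFinset ×ˢ h₁fin.toFinset)
      (fun pq => dotp (perp U) (pq.2 - pq.1) / dotp U (pq.2 - pq.1))
      (Finset.nonempty_product.mpr
        ⟨h₀fin.toFinset_nonempty.mpr h₀ne, h₁fin.toFinset_nonempty.mpr h₁ne⟩)
  rw [Finset.mem_product, Set.Finite.mem_toFinset, Set.Finite.mem_toFinset] at hpqF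
  obtain ⟨hp, hq⟩ := hpqF
  have hU2 : 0 < U.1 ^ 2 + U.2 ^ 2 := by
    by_contra h
    push_neg at h
    have h1 : U.1 = 0 := by nlinarith [sq_nonneg U.1, sq_nonneg U.2]
    have h2 : U.2 = 0 := by nlinarith [sq_nonneg U.1, sq_nonneg U.2]
    have h3 := hApos p hp q hq
    rw [dotp, h1, h2] at h3
    simp at h3
  have hmax' : ∀ p' ∈ S₀, ∀ q' ∈ S₁,
      dotp (perp U) (q' - p') * dotp U (q - p)
        ≤ dotp (perp U) (q - p) * dotp U (q' - p') := by
    intro p' hp' q' hq'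
    have := hmax (p', q') (Finset.mem_product.mpr
      ⟨Set.Finite.mem_toFinset _ |>.mpr hp', Set.Finite.mem_toFinset _ |>.mpr hq'⟩)
    simp only at this
    rwa [div_le_div_iff₀ (hApos p' hp' q' hq') (hApos p hp q hq)] at this
  refine ⟨p, hp, q, hq, ?_, ?_⟩
  · intro c hc
    show 0 ≤ Tor p q c
    apply sign_nonneg'
    have hmc := hmax' c hc q hq
    have hid := key_id U (q - p) (q - c)
    have hcross : dotp (perp (q - p)) (q - c) ≤ 0 := by nlinarith
    have heq : dotp (perp (q - p)) (c - q) = - dotp (perp (q - p)) (q - c) := by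
      simp [dotp, perp]; ring
    linarith [heq, hcross]
  · intro c hc
    show Tor p q c ≤ 0
    apply sign_nonpos'
    have hmc := hmax' p hp c hc
    have hid := key_id U (q - p) (c - p)
    have hcross : dotp (perp (q - p)) (c - p) ≤ 0 := by nlinarith
    have heq : dotp (perp (q - p)) (c - q) = dotp (perp (q - p)) (c - p) := by
      simp [dotp, perp]; ring
    linarith [heq, hcross]
end

section
/- Let S₀ and S₁ be finite nonempty point sets in the plane whose convex hulls are disjoint. Then there exist p ∈ S₀ and q ∈ S₁ such that both S₀ and S₁ are contained in RHP(p,q), i.e., an outer common tangent through a point of each set exists. -/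
lemma sign_nonpos_of_nonpos {r : ℝ} (h : r ≤ 0) : Real.sign r ≤ 0 := by
  rcases h.lt_or_eq with h | h
  · rw [Real.sign_of_neg h]; norm_num
  · rw [h, Real.sign_zero]

lemma key_tangent (A B : Set (ℝ × ℝ)) (hA : A.Finite) (hB : B.Finite)
    (hAne : A.Nonempty) (hBne : B.Nonempty)
    (hlt : ∀ a ∈ A, ∀ b ∈ B, a.1 < b.1) :
    ∃ p ∈ A, ∃ q ∈ B, ∀ c ∈ A ∪ B,
      (q.1 - p.1) * (c.2 - q.2) - (q.2 - p.2) * (c.1 - q.1) ≤ 0 := by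
  classical
  set sl : (ℝ × ℝ) → (ℝ × ℝ) → ℝ := fun a b => (b.2 - a.2) / (b.1 - a.1) with hsl
  have hBs : hB.toFinset.Nonempty := hB.toFinset_nonempty.2 hBne
  have hAs : hA.toFinset.Nonempty := hA.toFinset_nonempty.2 hAne
  set g : (ℝ × ℝ) → ℝ := fun p => ((hB.toFinset.image (sl p)).max' (hBs.image _)) with hg
  obtain ⟨p, hpA, hpmin⟩ := hA.toFinset.exists_min_image g hAs
  have hpA' : p ∈ A := hA.mem_toFinset.1 hpA
  have hattain : ∀ x : ℝ × ℝ, ∃ q ∈ hB.toFinset, sl x q = g x := by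
    intro x
    have := (hB.toFinset.image (sl x)).max'_mem (hBs.image _)
    rw [Finset.mem_image] at this
    obtain ⟨q, hq1, hq2⟩ := this
    exact ⟨q, hq1, hq2⟩
  obtain ⟨q, hqB, hq⟩ := hattain p
  have hqB' : q ∈ B := hB.mem_toFinset.1 hqB
  have hub : ∀ b ∈ B, sl p b ≤ sl p q := by
    intro b hb
    rw [hq]
    exact Finset.le_max' _ _ (Finset.mem_image_of_mem _ (hB.mem_toFinset.2 hb))
  have hlb : ∀ a ∈ A, sl p q ≤ sl a q := by
    intro a ha
    by_contra hcon
    push_neg at hcon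
    have hga : g p ≤ g a := hpmin a (hA.mem_toFinset.2 ha)
    obtain ⟨q', hq'B, hq'⟩ := hattain a
    have hq'B' : q' ∈ B := hB.mem_toFinset.1 hq'B
    have h1 : sl p q' ≤ sl p q := hub q' hq'B'
    have h2 : sl p q ≤ sl a q' := by rw [hq, hq']; exact hga
    have dpq : (0:ℝ) < q.1 - p.1 := sub_pos.2 (hlt p hpA' q hqB')
    have daq : (0:ℝ) < q.1 - a.1 := sub_pos.2 (hlt a ha q hqB')
    have dpq' : (0:ℝ) < q'.1 - p.1 := sub_pos.2 (hlt p hpA' q' hq'B')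
    have daq' : (0:ℝ) < q'.1 - a.1 := sub_pos.2 (hlt a ha q' hq'B')
    set m := sl p q with hm
    have e1 : q.2 - p.2 = m * (q.1 - p.1) := by
      rw [hm, hsl]; field_simp
    have e2 : q.2 - a.2 < m * (q.1 - a.1) := by
      have := hcon
      rw [hsl] at this
      exact (div_lt_iff₀ daq).1 this
    have e3 : m * (q'.1 - a.1) ≤ q'.2 - a.2 := by
      have := h2
      rw [hsl] at this
      exact (le_div_iff₀ daq').1 this
    have e4 : q'.2 - p.2 ≤ m * (q'.1 - p.1) := by
      have := h1
      rw [hsl] at this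
      exact (div_le_iff₀ dpq').1 this
    nlinarith [e1, e2, e3, e4]
  refine ⟨p, hpA', q, hqB', ?_⟩
  intro c hc
  have dpq : (0:ℝ) < q.1 - p.1 := sub_pos.2 (hlt p hpA' q hqB')
  have e1 : q.2 - p.2 = sl p q * (q.1 - p.1) := by
    rw [hsl]; field_simp
  rcases hc with hc | hc
  · -- c ∈ A : sl p q ≤ sl c q
    have dcq : (0:ℝ) < q.1 - c.1 := sub_pos.2 (hlt c hc q hqB')
    have hb := hlb c hc
    rw [hsl] at hb
    have e2 : sl p q * (q.1 - c.1) ≤ q.2 - c.2 := (le_div_iff₀ dcq).1 hb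
    nlinarith [mul_le_mul_of_nonneg_left e2 dpq.le, e1]
  · -- c ∈ B : sl p c ≤ sl p q
    have dpc : (0:ℝ) < c.1 - p.1 := sub_pos.2 (hlt p hpA' c hc)
    have hb := hub c hc
    rw [hsl] at hb
    have e2 : c.2 - p.2 ≤ sl p q * (c.1 - p.1) := (div_le_iff₀ dpc).1 hb
    nlinarith [mul_le_mul_of_nonneg_left e2 dpq.le, e1]

theorem stmt14 (S₀ S₁ : Set (ℝ × ℝ)) (h₀fin : S₀.Finite) (h₁fin : S₁.Finite)
    (h₀ne : S₀.Nonempty) (h₁ne : S₁.Nonempty)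
    (hdisj : convexHull ℝ S₀ ∩ convexHull ℝ S₁ = ∅)
    (hSdisj : S₀ ∩ S₁ = ∅)
    (hgp : ∀ x ∈ S₀ ∪ S₁, ∀ y ∈ S₀ ∪ S₁, ∀ z ∈ S₀ ∪ S₁,
      x ≠ y → y ≠ z → x ≠ z → ¬ Collinear ℝ ({x, y, z} : Set (ℝ × ℝ))) :
    ∃ p ∈ S₀, ∃ q ∈ S₁,
      S₀ ⊆ {c | Tor p q c ≤ 0} ∧ S₁ ⊆ {c | Tor p q c ≤ 0} := by
  classical
  obtain ⟨f, u, v, hfu, huv, hfv⟩ :=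
    geometric_hahn_banach_compact_closed
      (convex_convexHull ℝ S₀) (h₀fin.isCompact_convexHull ℝ)
      (convex_convexHull ℝ S₁) ((h₁fin.isCompact_convexHull ℝ).isClosed)
      (Set.disjoint_iff_inter_eq_empty.2 hdisj)
  set a : ℝ := f (1, 0) with ha
  set b : ℝ := f (0, 1) with hb
  have hf : ∀ x : ℝ × ℝ, f x = a * x.1 + b * x.2 := by
    intro x
    have hx : x = x.1 • ((1:ℝ), (0:ℝ)) + x.2 • ((0:ℝ), (1:ℝ)) := by
      ext <;> simp
    calc f x = f (x.1 • ((1:ℝ), (0:ℝ)) + x.2 • ((0:ℝ), (1:ℝ))) := by rw [← hx]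
    _ = x.1 • f ((1:ℝ), (0:ℝ)) + x.2 • f ((0:ℝ), (1:ℝ)) := by
        rw [map_add, map_smul, map_smul]
    _ = a * x.1 + b * x.2 := by rw [← ha, ← hb]; simp [smul_eq_mul]; ring
  set φ : (ℝ × ℝ) → (ℝ × ℝ) := fun x => (a * x.1 + b * x.2, -b * x.1 + a * x.2) with hφ
  have hS₀lt : ∀ x ∈ S₀, f x < u := fun x hx => hfu x (subset_convexHull ℝ S₀ hx)
  have hS₁gt : ∀ x ∈ S₁, v < f x := fun x hx => hfv x (subset_convexHull ℝ S₁ hx)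
  have hab : 0 < a ^ 2 + b ^ 2 := by
    obtain ⟨x₀, hx₀⟩ := h₀ne
    obtain ⟨x₁, hx₁⟩ := h₁ne
    have hne : f x₀ ≠ f x₁ := by
      have := hS₀lt x₀ hx₀
      have := hS₁gt x₁ hx₁
      linarith
    by_contra hcon
    push_neg at hcon
    have ha0 : a = 0 := by nlinarith [sq_nonneg a, sq_nonneg b]
    have hb0 : b = 0 := by nlinarith [sq_nonneg a, sq_nonneg b]
    apply hne
    rw [hf, hf, ha0, hb0]; ring
  obtain ⟨P, hP, Q, hQ, hall⟩ :=
    key_tangent (φ '' S₀) (φ '' S₁) (h₀fin.image φ) (h₁fin.image φ)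
      (h₀ne.image φ) (h₁ne.image φ)
      (by
        rintro _ ⟨x, hx, rfl⟩ _ ⟨y, hy, rfl⟩
        have h1 : (φ x).1 = f x := by rw [hf]
        have h2 : (φ y).1 = f y := by rw [hf]
        rw [h1, h2]
        have := hS₀lt x hx
        have := hS₁gt y hy
        linarith)
  obtain ⟨p, hp, rfl⟩ := hP
  obtain ⟨q, hq, rfl⟩ := hQ
  have hscale : ∀ c : ℝ × ℝ,
      ((φ q).1 - (φ p).1) * ((φ c).2 - (φ q).2) - ((φ q).2 - (φ p).2) * ((φ c).1 - (φ q).1)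
        = (a ^ 2 + b ^ 2) * ((q.1 - p.1) * (c.2 - q.2) - (q.2 - p.2) * (c.1 - q.1)) := by
    intro c; simp only [hφ]; ring
  have hcross : ∀ c ∈ S₀ ∪ S₁,
      (q.1 - p.1) * (c.2 - q.2) - (q.2 - p.2) * (c.1 - q.1) ≤ 0 := by
    intro c hc
    have hmem : φ c ∈ (φ '' S₀) ∪ (φ '' S₁) := by
      rcases hc with hc | hc
      · exact Or.inl ⟨c, hc, rfl⟩
      · exact Or.inr ⟨c, hc, rfl⟩
    have h := hall (φ c) hmem
    rw [hscale c] at h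
    nlinarith [h, hab]
  have hTor : ∀ c : ℝ × ℝ,
      dotp (perp (q - p)) (c - q) = (q.1 - p.1) * (c.2 - q.2) - (q.2 - p.2) * (c.1 - q.1) := by
    intro c; simp [dotp, perp]; ring
  refine ⟨p, hp, q, hq, ?_, ?_⟩
  · intro c hc
    show Tor p q c ≤ 0
    rw [Tor, hTor c]
    exact sign_nonpos_of_nonpos (hcross c (Or.inl hc))
  · intro c hc
    show Tor p q c ≤ 0
    rw [Tor, hTor c]
    exact sign_nonpos_of_nonpos (hcross c (Or.inr hc))
end

section
/- If the convex hull of a finite point set S₀ is contained in the interior of the convex hull of a finite point set S₁, then there is no outer common tangent: there exist no p ∈ S₀, q ∈ S₁ with p ≠ q such that S₀ ∪ S₁ ⊆ RHP(p,q). -/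
theorem stmt15 (S₀ S₁ : Set (ℝ × ℝ)) (h₀fin : S₀.Finite) (h₁fin : S₁.Finite)
    (h₀ne : S₀.Nonempty)
    (hsub : convexHull ℝ S₀ ⊆ interior (convexHull ℝ S₁)) :
    ¬ ∃ p ∈ S₀, ∃ q ∈ S₁, p ≠ q ∧ S₀ ∪ S₁ ⊆ {c | Tor p q c ≤ 0} := by
  rintro ⟨p, hp, q, hq, hpq, hH⟩
  set n : ℝ × ℝ := perp (q - p) with hn
  have hnne : n ≠ 0 := by
    intro h
    have h1 : (-(q - p).2, (q - p).1) = ((0:ℝ), (0:ℝ)) := h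
    rw [Prod.mk.injEq] at h1
    apply hpq
    have h2 : q - p = 0 := Prod.ext_iff.mpr ⟨by simpa using h1.2, by simpa using neg_eq_zero.mp h1.1⟩
    exact (sub_eq_zero.mp h2).symm
  -- the closed halfplane
  have hC : ∀ c ∈ S₀ ∪ S₁, dotp n (c - q) ≤ 0 := by
    intro c hc
    by_contra hpos
    push_neg at hpos
    have := hH hc
    simp only [Set.mem_setOf_eq, Tor] at this
    rw [Real.sign_of_pos hpos] at this
    linarith
  have hlin : IsLinearMap ℝ (fun c : ℝ × ℝ => dotp n c) := by
    constructor
    · intro x y; simp [dotp]; ring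
    · intro c x; simp [dotp]; ring
  have hconv : Convex ℝ {c : ℝ × ℝ | dotp n c ≤ dotp n q} :=
    convex_halfSpace_le hlin _
  have hhull : convexHull ℝ S₁ ⊆ {c : ℝ × ℝ | dotp n c ≤ dotp n q} := by
    apply convexHull_min _ hconv
    intro c hc
    have := hC c (Or.inr hc)
    simp only [Set.mem_setOf_eq]
    simp only [dotp] at this ⊢
    have hc1 : (c - q).1 = c.1 - q.1 := rfl
    have hc2 : (c - q).2 = c.2 - q.2 := rfl
    rw [hc1, hc2] at this
    linarith
  have hpint : p ∈ interior (convexHull ℝ S₁) := hsub (subset_convexHull ℝ S₀ hp)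
  rw [mem_interior_iff_mem_nhds, Metric.mem_nhds_iff] at hpint
  obtain ⟨ε, hε, hball⟩ := hpint
  set t : ℝ := ε / (2 * (‖n‖ + 1)) with ht
  have hnn : (0:ℝ) < ‖n‖ + 1 := by positivity
  have htpos : 0 < t := by positivity
  have hxball : p + t • n ∈ Metric.ball p ε := by
    rw [Metric.mem_ball, dist_eq_norm]
    have : p + t • n - p = t • n := by abel
    rw [this, norm_smul, Real.norm_eq_abs, abs_of_pos htpos]
    calc t * ‖n‖ < t * (‖n‖ + 1) := by nlinarith
      _ = ε / 2 := by rw [ht, div_mul_eq_mul_div, div_eq_div_iff (by positivity) (by norm_num)]; ring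
      _ < ε := by linarith
  have hxC : dotp n (p + t • n) ≤ dotp n q := hhull (hball hxball)
  -- compute dotp n (p - q) = 0 and dotp n n > 0
  have hnsq : 0 < n.1 * n.1 + n.2 * n.2 := by
    have : n.1 ≠ 0 ∨ n.2 ≠ 0 := by
      by_contra hcon
      push_neg at hcon
      exact hnne (Prod.ext hcon.1 hcon.2)
    rcases this with h1 | h2
    · nlinarith [sq_nonneg n.2, sq_abs n.1, abs_pos.mpr h1]
    · nlinarith [sq_nonneg n.1, sq_abs n.2, abs_pos.mpr h2]
  have hperp : dotp n (p - q) = 0 := by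
    simp only [dotp, hn, perp]
    have h1 : (q - p).1 = q.1 - p.1 := rfl
    have h2 : (q - p).2 = q.2 - p.2 := rfl
    have h3 : (p - q).1 = p.1 - q.1 := rfl
    have h4 : (p - q).2 = p.2 - q.2 := rfl
    rw [h1, h2, h3, h4]; ring
  have hexp : dotp n (p + t • n) = dotp n p + t * (n.1 * n.1 + n.2 * n.2) := by
    simp only [dotp]
    have h1 : (p + t • n).1 = p.1 + t * n.1 := rfl
    have h2 : (p + t • n).2 = p.2 + t * n.2 := rfl
    rw [h1, h2]; ring
  have hpq0 : dotp n p = dotp n q := by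
    simp only [dotp] at hperp ⊢
    have h3 : (p - q).1 = p.1 - q.1 := rfl
    have h4 : (p - q).2 = p.2 - q.2 := rfl
    rw [h3, h4] at hperp
    linarith
  rw [hexp, hpq0] at hxC
  nlinarith
end

section
/- Number of iterations bound: let (aᵢ) and (bᵢ) be sequences of natural numbers with a₀ = b₀ = 0, both non-decreasing, such that whenever iteration i performs an update (aᵢ + bᵢ > aᵢ₋₁ + bᵢ₋₁), the increase satisfies aᵢ + bᵢ ≥ aᵢ₋₁ + bᵢ₋₁ + (i - j)/2 where j < i is the previous update iteration (j = 0 if none). If aᵢ ≤ A and bᵢ ≤ B for all i, then the last update occurs at some iteration i ≤ 2(A + B). -/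
theorem stmt17 (a b : ℕ → ℕ) (A B : ℕ)
    (ha0 : a 0 = 0) (hb0 : b 0 = 0) (hamono : Monotone a) (hbmono : Monotone b)
    (hbound : ∀ i, a i ≤ A ∧ b i ≤ B)
    (hupd : ∀ i j : ℕ, j < i →
      a (i - 1) + b (i - 1) < a i + b i →
      (∀ m : ℕ, j < m → m < i → a (m - 1) + b (m - 1) = a m + b m) →
      (j = 0 ∨ a (j - 1) + b (j - 1) < a j + b j) →
      2 * (a j + b j) + (i - j) ≤ 2 * (a i + b i)) :
    ∀ i : ℕ, 0 < i → a (i - 1) + b (i - 1) < a i + b i → i ≤ 2 * (A + B) := by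
  have key : ∀ i : ℕ, 0 < i → a (i - 1) + b (i - 1) < a i + b i → i ≤ 2 * (a i + b i) := by
    intro i
    induction i using Nat.strong_induction_on with
    | _ i ih =>
      intro hi hupd_i
      classical
      set P : ℕ → Prop := fun m => 0 < m ∧ a (m - 1) + b (m - 1) < a m + b m with hP
      set j := Nat.findGreatest P (i - 1) with hj
      have hji : j < i := lt_of_le_of_lt (Nat.findGreatest_le _) (by omega)
      have hmid : ∀ m : ℕ, j < m → m < i → a (m - 1) + b (m - 1) = a m + b m := by
        intro m hjm hmi
        have hnp : ¬ P m := Nat.findGreatest_is_greatest hjm (by omega)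
        have : ¬ (a (m - 1) + b (m - 1) < a m + b m) := by
          intro h; exact hnp ⟨by omega, h⟩
        have hle : a (m - 1) + b (m - 1) ≤ a m + b m :=
          Nat.add_le_add (hamono (by omega)) (hbmono (by omega))
        omega
      have hjcase : j = 0 ∨ a (j - 1) + b (j - 1) < a j + b j := by
        rcases Nat.eq_zero_or_pos j with h | h
        · exact Or.inl h
        · exact Or.inr (Nat.findGreatest_of_ne_zero hj.symm (by omega)).2
      have hmain := hupd i j hji hupd_i hmid hjcase
      have hjbound : j ≤ 2 * (a j + b j) := by
        rcases hjcase with h | h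
        · simp [h, ha0, hb0]
        · rcases Nat.eq_zero_or_pos j with h0 | h0
          · simp [h0, ha0, hb0]
          · exact ih j hji h0 h
      omega
  intro i hi h
  have := key i hi h
  have ha := (hbound i).1
  have hb := (hbound i).2
  omega
end
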